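/- Let K₁, K₂, K₃ ∈ SU(2) satisfy K₁K₂K₃ = 1, and let θᵢ = arccos(Re(tr Kᵢ)/2) ∈ [0, π]. Then the following four inequalities hold: θ₁ + θ₂ + θ₃ ≤ 2π, θ₁ + θ₂ − θ₃ ≥ 0, θ₁ − θ₂ + θ₃ ≥ 0, and −θ₁ + θ₂ + θ₃ ≥ 0. -/

import Mathlib

open Matrix Real

lemma arccos_anti {x y : ℝ} (h : x ≤ y) : Real.arccos y ≤ Real.arccos x := by
  unfold Real.arccos
  linarith [Real.monotone_arcsin h]

lemma su2_struct (K : Matrix (Fin 2) (Fin 2) ℂ)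
    (h : K ∈ Matrix.specialUnitaryGroup (Fin 2) ℂ) :
    Kᴴ = K.adjugate := by
  obtain ⟨hu, hd⟩ := Matrix.mem_specialUnitaryGroup_iff.mp h
  have h1 : K * K.adjugate = 1 := by
    rw [Matrix.mul_adjugate, hd, one_smul]
  have h2 : Kᴴ * K = 1 := Matrix.mem_unitaryGroup_iff'.mp hu
  calc Kᴴ = Kᴴ * (K * K.adjugate) := by rw [h1, mul_one]
    _ = (Kᴴ * K) * K.adjugate := by rw [mul_assoc]
    _ = K.adjugate := by rw [h2, one_mul]

lemma su2_data (K : Matrix (Fin 2) (Fin 2) ℂ)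
    (h : K ∈ Matrix.specialUnitaryGroup (Fin 2) ℂ) :
    K 1 1 = starRingEnd ℂ (K 0 0) ∧ K 1 0 = -(starRingEnd ℂ (K 0 1)) ∧
      (K 0 0).re^2 + (K 0 0).im^2 + (K 0 1).re^2 + (K 0 1).im^2 = 1 := by
  have hs := su2_struct K h
  rw [Matrix.adjugate_fin_two] at hs
  have e11 : K 1 1 = starRingEnd ℂ (K 0 0) := by
    have := congrFun (congrFun hs 0) 0
    simp [Matrix.conjTranspose_apply] at this
    exact this.symm
  have e10 : K 1 0 = -(starRingEnd ℂ (K 0 1)) := by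
    have := congrFun (congrFun hs 0) 1
    simp [Matrix.conjTranspose_apply] at this
    have := congrArg (starRingEnd ℂ) this; simpa using this
  refine ⟨e11, e10, ?_⟩
  have hd : K.det = 1 := (Matrix.mem_specialUnitaryGroup_iff.mp h).2
  rw [Matrix.det_fin_two, e11, e10] at hd
  have := congrArg Complex.re hd
  simp [Complex.mul_re, Complex.add_re] at this
  nlinarith [this]

lemma su2_trace_re (K : Matrix (Fin 2) (Fin 2) ℂ)
    (h : K ∈ Matrix.specialUnitaryGroup (Fin 2) ℂ) :
    (Matrix.trace K).re = 2 * (K 0 0).re := by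
  have e11 := (su2_data K h).1
  rw [Matrix.trace_fin_two, Complex.add_re, e11]
  simp; ring

lemma cs_key (x u p q y v r s : ℝ) (h1 : x^2+u^2+p^2+q^2 = 1)
    (h2 : y^2+v^2+r^2+s^2 = 1) :
    Real.cos (Real.arccos x + Real.arccos y) ≤ x*y - u*v - p*r - q*s ∧
    x*y - u*v - p*r - q*s ≤ Real.cos (Real.arccos x - Real.arccos y) := by
  have hx1 : -1 ≤ x := by nlinarith [sq_nonneg (x+1)]
  have hx2 : x ≤ 1 := by nlinarith [sq_nonneg (x-1)]
  have hy1 : -1 ≤ y := by nlinarith [sq_nonneg (y+1)]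
  have hy2 : y ≤ 1 := by nlinarith [sq_nonneg (y-1)]
  have hS1 : Real.sin (Real.arccos x) = Real.sqrt (1 - x^2) := by
    rw [Real.sin_arccos]
  have hS2 : Real.sin (Real.arccos y) = Real.sqrt (1 - y^2) := by
    rw [Real.sin_arccos]
  set S1 := Real.sqrt (1 - x^2) with hS1d
  set S2 := Real.sqrt (1 - y^2) with hS2d
  have hS1n : 0 ≤ S1 := Real.sqrt_nonneg _
  have hS2n : 0 ≤ S2 := Real.sqrt_nonneg _
  have hS1sq : S1^2 = u^2+p^2+q^2 := by
    rw [hS1d, Real.sq_sqrt (by nlinarith)]; linarith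
  have hS2sq : S2^2 = v^2+r^2+s^2 := by
    rw [hS2d, Real.sq_sqrt (by nlinarith)]; linarith
  have hcs : (u*v+p*r+q*s)^2 ≤ S1^2 * S2^2 := by
    rw [hS1sq, hS2sq]
    nlinarith [sq_nonneg (u*r-p*v), sq_nonneg (u*s-q*v), sq_nonneg (p*s-q*r)]
  have hub : u*v+p*r+q*s ≤ S1*S2 := by nlinarith [mul_nonneg hS1n hS2n]
  have hlb : -(S1*S2) ≤ u*v+p*r+q*s := by nlinarith [mul_nonneg hS1n hS2n]
  rw [Real.cos_add, Real.cos_sub, Real.cos_arccos hx1 hx2, Real.cos_arccos hy1 hy2,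
    hS1, hS2]
  constructor <;> linarith

/-- If `K₁ K₂ K₃ = 1` in `SU(2)` and `θᵢ = arccos(Re(tr Kᵢ)/2) ∈ [0, π]`
are the corresponding angles, then the four inequalities cutting out the tetrahedron `Γ`
hold: `θ₁+θ₂+θ₃ ≤ 2π`, `θ₁+θ₂−θ₃ ≥ 0`, `θ₁−θ₂+θ₃ ≥ 0`, `−θ₁+θ₂+θ₃ ≥ 0`. -/
theorem trinion_angles_in_tetrahedron
    (K₁ K₂ K₃ : Matrix (Fin 2) (Fin 2) ℂ)
    (h₁ : K₁ ∈ Matrix.specialUnitaryGroup (Fin 2) ℂ)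
    (h₂ : K₂ ∈ Matrix.specialUnitaryGroup (Fin 2) ℂ)
    (h₃ : K₃ ∈ Matrix.specialUnitaryGroup (Fin 2) ℂ)
    (hprod : K₁ * K₂ * K₃ = 1)
    (θ₁ θ₂ θ₃ : ℝ)
    (hθ₁ : θ₁ = Real.arccos ((Matrix.trace K₁).re / 2))
    (hθ₂ : θ₂ = Real.arccos ((Matrix.trace K₂).re / 2))
    (hθ₃ : θ₃ = Real.arccos ((Matrix.trace K₃).re / 2)) :
    θ₁ + θ₂ + θ₃ ≤ 2 * Real.pi ∧ 0 ≤ θ₁ + θ₂ - θ₃ ∧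
      0 ≤ θ₁ - θ₂ + θ₃ ∧ 0 ≤ -θ₁ + θ₂ + θ₃ := by
  set M := K₁ * K₂ with hM
  have hMmem : M ∈ Matrix.specialUnitaryGroup (Fin 2) ℂ := mul_mem h₁ h₂
  -- K₃ = adjugate M
  have hK₃ : K₃ = M.adjugate := by
    have hd : M.det = 1 := (Matrix.mem_specialUnitaryGroup_iff.mp hMmem).2
    have h1 : M.adjugate * M = 1 := by rw [Matrix.adjugate_mul, hd, one_smul]
    calc K₃ = (M.adjugate * M) * K₃ := by rw [h1, one_mul]
      _ = M.adjugate * (M * K₃) := by rw [mul_assoc]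
      _ = M.adjugate := by rw [hprod, mul_one]
  have htr3 : Matrix.trace K₃ = Matrix.trace M := by
    rw [hK₃, Matrix.adjugate_fin_two, Matrix.trace_fin_two, Matrix.trace_fin_two]
    simp [add_comm]
  -- entry data
  obtain ⟨e1a, e1b, e1n⟩ := su2_data K₁ h₁
  obtain ⟨e2a, e2b, e2n⟩ := su2_data K₂ h₂
  have hM00 : M 0 0 = K₁ 0 0 * K₂ 0 0 - K₁ 0 1 * starRingEnd ℂ (K₂ 0 1) := by
    rw [hM, Matrix.mul_apply, Fin.sum_univ_two, e2b]; ring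
  set x := (K₁ 0 0).re; set u := (K₁ 0 0).im
  set p := (K₁ 0 1).re; set q := (K₁ 0 1).im
  set y := (K₂ 0 0).re; set v := (K₂ 0 0).im
  set r := (K₂ 0 1).re; set s := (K₂ 0 1).im
  have hc3 : (Matrix.trace K₃).re / 2 = x*y - u*v - p*r - q*s := by
    rw [htr3, su2_trace_re M hMmem, hM00]
    simp [Complex.sub_re, Complex.mul_re, Complex.conj_re, Complex.conj_im]
    ring
  have ht1 : θ₁ = Real.arccos x := by
    rw [hθ₁, su2_trace_re K₁ h₁]; ring_nf; rfl
  have ht2 : θ₂ = Real.arccos y := by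
    rw [hθ₂, su2_trace_re K₂ h₂]; ring_nf; rfl
  obtain ⟨hl, hr⟩ := cs_key x u p q y v r s e1n e2n
  rw [← ht1, ← ht2, ← hc3] at hl hr
  set c₃ := (Matrix.trace K₃).re / 2
  have ht3 : θ₃ = Real.arccos c₃ := hθ₃
  -- bounds on angles
  have h1π : θ₁ ≤ Real.pi := by rw [hθ₁]; exact Real.arccos_le_pi _
  have h2π : θ₂ ≤ Real.pi := by rw [hθ₂]; exact Real.arccos_le_pi _
  have h3π : θ₃ ≤ Real.pi := by rw [hθ₃]; exact Real.arccos_le_pi _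
  have h10 : 0 ≤ θ₁ := by rw [hθ₁]; exact Real.arccos_nonneg _
  have h20 : 0 ≤ θ₂ := by rw [hθ₂]; exact Real.arccos_nonneg _
  have h30 : 0 ≤ θ₃ := by rw [hθ₃]; exact Real.arccos_nonneg _
  -- inequality 1
  have ineq1 : θ₁ + θ₂ + θ₃ ≤ 2 * Real.pi := by
    by_cases hs : θ₁ + θ₂ ≤ Real.pi
    · linarith
    · push_neg at hs
      have hcos : Real.cos (2 * Real.pi - (θ₁ + θ₂)) = Real.cos (θ₁ + θ₂) := by
        rw [Real.cos_sub]; simp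
      have := arccos_anti (hcos ▸ hl)
      rw [Real.arccos_cos (by linarith) (by linarith)] at this
      rw [ht3]; linarith
  -- inequality 2
  have ineq2 : θ₃ ≤ θ₁ + θ₂ := by
    by_cases hs : θ₁ + θ₂ ≤ Real.pi
    · have := arccos_anti hl
      rw [Real.arccos_cos (by linarith) hs] at this
      rw [ht3]; linarith
    · linarith
  -- inequalities 3, 4
  have ineq34 : |θ₁ - θ₂| ≤ θ₃ := by
    have habs : |θ₁ - θ₂| ≤ Real.pi := abs_le.mpr ⟨by linarith, by linarith⟩
    have hcos : Real.cos |θ₁ - θ₂| = Real.cos (θ₁ - θ₂) := Real.cos_abs _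
    have := arccos_anti (hcos ▸ hr)
    rw [Real.arccos_cos (abs_nonneg _) habs] at this
    rw [ht3]; linarith
  obtain ⟨i3, i4⟩ := abs_le.mp (abs_le.mpr (abs_le.mp ineq34))
  exact ⟨ineq1, by linarith, by linarith, by linarith⟩
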